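/- arXiv:2005.01022 — 2 statements merged into one kernel-verified Lean document; each statement's English description precedes it below -/
import Mathlib

section
/- If L is a symmetric linear operator and K is a skew-symmetric linear operator on a finite-dimensional real inner product space, then every Jordan chain v₁,…,v_m with L v₁ = 0 and L v_j = K v_{j−1} for j ≥ 2, that terminates (i.e., L v = K v_m has no solution), has even length m. Specifically: if v₁,…,v₃ satisfy L v₁ = 0, L v₂ = K v₁, L v₃ = K v₂, Ker L = span{v₁}, and Range L = (Ker L)^⊥, then L v₄ = K v₃ is solvable. -/
theorem stmt9 {V : Type*} [NormedAddCommGroup V] [InnerProductSpace ℝ V]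
    [FiniteDimensional ℝ V]
    (L K : V →ₗ[ℝ] V)
    (hL : ∀ x y : V, (inner ℝ (L x) y : ℝ) = inner ℝ x (L y))
    (hK : ∀ x y : V, (inner ℝ (K x) y : ℝ) = -inner ℝ x (K y))
    (v₁ v₂ v₃ : V) (hv₁ : v₁ ≠ 0)
    (hker : LinearMap.ker L = Submodule.span ℝ {v₁})
    (hrange : LinearMap.range L = (LinearMap.ker L)ᗮ)
    (h1 : L v₁ = 0) (h2 : L v₂ = K v₁) (h3 : L v₃ = K v₂) :
    ∃ v₄ : V, L v₄ = K v₃ := by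
  have hKv2 : (inner ℝ (K v₂) v₂ : ℝ) = 0 := by
    have h := hK v₂ v₂
    rw [real_inner_comm (K v₂) v₂] at h
    linarith [h]
  have key : (inner ℝ v₁ (K v₃) : ℝ) = 0 := by
    have : (inner ℝ v₁ (K v₃) : ℝ) = -(inner ℝ (K v₁) v₃ : ℝ) := by
      linarith [hK v₁ v₃]
    rw [this, ← h2, hL, h3, real_inner_comm, hKv2, neg_zero]
  have hmem : K v₃ ∈ LinearMap.range L := by
    rw [hrange, hker]
    intro u hu
    obtain ⟨c, rfl⟩ := Submodule.mem_span_singleton.mp hu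
    rw [real_inner_smul_left, key, mul_zero]
  obtain ⟨v₄, hv₄⟩ := hmem
  exact ⟨v₄, hv₄⟩
end

section
/- If a real quadratic pencil E(c) = c²A + cB + C with A,B,C symmetric satisfies ⟨u,Bu⟩²/4 > ⟨u,Au⟩·⟨u,Cu⟩ for all nonzero u ∈ ℝᴺ and A is positive definite, then for every nonzero u the scalar quadratic ⟨u,Au⟩c² + ⟨u,Bu⟩c + ⟨u,Cu⟩ has two distinct real roots; in particular every eigenvalue c with E(c)u = 0 for some u ≠ 0 is real. -/
open Matrix

lemma auxQuad (a b g : ℝ) (ha : 0 < a) (hd : ((1/2:ℝ)*b)^2 > a*g) :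
    ∃ r₁ r₂ : ℝ, r₁ ≠ r₂ ∧ ∀ x : ℝ, a*x^2+b*x+g = 0 ↔ x = r₁ ∨ x = r₂ := by
  have hD : (0:ℝ) < discrim a b g := by unfold discrim; nlinarith
  set s := Real.sqrt (discrim a b g) with hs
  have hs2 : discrim a b g = s * s := (Real.mul_self_sqrt hD.le).symm
  have hspos : 0 < s := Real.sqrt_pos.mpr hD
  refine ⟨(-b+s)/(2*a), (-b-s)/(2*a), ?_, ?_⟩
  · intro h
    rw [div_eq_div_iff (by positivity) (by positivity)] at h
    nlinarith
  · intro x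
    have := quadratic_eq_zero_iff (ne_of_gt ha) hs2 x
    rw [← this]; ring_nf

lemma symmDot {N : ℕ} (S : Matrix (Fin N) (Fin N) ℝ) (hS : S.IsSymm)
    (v w : Fin N → ℝ) : v ⬝ᵥ S *ᵥ w = w ⬝ᵥ S *ᵥ v := by
  rw [Matrix.dotProduct_mulVec]
  conv_lhs => rw [← hS.eq, Matrix.vecMul_transpose]
  rw [dotProduct_comm]

set_option maxHeartbeats 1000000 in
lemma auxCore {N : ℕ} (A B C M Nm : Matrix (Fin N) (Fin N) ℝ)
    (hA : A.PosDef)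
    (hhyp : ∀ u : Fin N → ℝ, u ≠ 0 →
      ((1 / 2 : ℝ) * (u ⬝ᵥ B.mulVec u)) ^ 2 > (u ⬝ᵥ A.mulVec u) * (u ⬝ᵥ C.mulVec u))
    (μ ν : ℝ) (hν : ν ≠ 0) (x y : Fin N → ℝ) (hxy : ¬(x = 0 ∧ y = 0))
    (hMs : M.IsSymm) (hNs : Nm.IsSymm)
    (hMform : ∀ w, w ⬝ᵥ M *ᵥ w = (μ^2-ν^2)*(w ⬝ᵥ A *ᵥ w) + μ*(w ⬝ᵥ B *ᵥ w) + w ⬝ᵥ C *ᵥ w)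
    (hNform : ∀ w, w ⬝ᵥ Nm *ᵥ w = ν*(2*μ*(w ⬝ᵥ A *ᵥ w) + w ⬝ᵥ B *ᵥ w))
    (h1 : M *ᵥ x = Nm *ᵥ y) (h2 : Nm *ᵥ x = - (M *ᵥ y)) : False := by
  set P : ℝ := x ⬝ᵥ M *ᵥ x with hP
  set Q : ℝ := x ⬝ᵥ Nm *ᵥ x with hQ
  have hxNy : x ⬝ᵥ Nm *ᵥ y = P := by rw [← h1]
  have hxMy : x ⬝ᵥ M *ᵥ y = -Q := by
    have := congrArg (fun v => x ⬝ᵥ v) h2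
    simp only [dotProduct_neg] at this
    rw [← hQ] at this; linarith
  have hyMy : y ⬝ᵥ M *ᵥ y = -P := by
    have h3 : y ⬝ᵥ Nm *ᵥ x = P := by rw [symmDot Nm hNs, hxNy]
    rw [h2] at h3
    simp only [dotProduct_neg] at h3; linarith
  have hyNy : y ⬝ᵥ Nm *ᵥ y = -Q := by
    rw [← h1, symmDot M hMs, hxMy]
  have hyMx : y ⬝ᵥ M *ᵥ x = -Q := by rw [symmDot M hMs, hxMy]
  have hyNx : y ⬝ᵥ Nm *ᵥ x = P := by rw [symmDot Nm hNs, hxNy]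
  have expand : ∀ (S : Matrix (Fin N) (Fin N) ℝ) (c₁ c₂ : ℝ),
      (c₁ • x + c₂ • y) ⬝ᵥ S *ᵥ (c₁ • x + c₂ • y) =
      c₁^2 * (x ⬝ᵥ S *ᵥ x) + c₁*c₂*(x ⬝ᵥ S *ᵥ y) + c₁*c₂*(y ⬝ᵥ S *ᵥ x)
        + c₂^2*(y ⬝ᵥ S *ᵥ y) := by
    intro S c₁ c₂
    simp only [Matrix.mulVec_add, Matrix.mulVec_smul, dotProduct_add,
      add_dotProduct, smul_dotProduct, dotProduct_smul,
      smul_eq_mul]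
    ring
  obtain ⟨w, hw0, hwN, hwM⟩ : ∃ w : Fin N → ℝ, w ≠ 0 ∧ w ⬝ᵥ Nm *ᵥ w = 0 ∧ 0 ≤ w ⬝ᵥ M *ᵥ w := by
    by_cases hQ0 : Q = 0
    · by_cases hx0 : x = 0
      · have hy0 : y ≠ 0 := fun h => hxy ⟨hx0, h⟩
        have hP0 : P = 0 := by simp [hP, hx0]
        exact ⟨y, hy0, by rw [hyNy, hQ0, neg_zero], by rw [hyMy, hP0, neg_zero]⟩
      · by_cases hP0 : 0 ≤ P
        · exact ⟨x, hx0, hQ0 ▸ hQ.symm, by rw [← hP]; exact hP0⟩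
        · have hy0 : y ≠ 0 := by
            intro h
            rw [h] at hyMy; simp at hyMy; exact hP0 (by linarith)
          exact ⟨y, hy0, by rw [hyNy, hQ0, neg_zero], by rw [hyMy]; linarith⟩
    · set ρ : ℝ := Real.sqrt (P^2 + Q^2) with hρ
      have hρ2 : ρ^2 = P^2 + Q^2 := Real.sq_sqrt (by positivity)
      set t : ℝ := (P + ρ)/Q with ht
      have htQ : t * Q = P + ρ := by rw [ht]; exact div_mul_cancel₀ _ hQ0
      have hNzero : Q + 2*t*P - t^2*Q = 0 := by
        have h5 : (Q + 2*t*P - t^2*Q) * Q = 0 := by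
          linear_combination (2*P - (t*Q + P + ρ)) * htQ - hρ2
        rcases mul_eq_zero.1 h5 with h | h
        · exact h
        · exact absurd h hQ0
      have hw1N : ((1:ℝ) • x + t • y) ⬝ᵥ Nm *ᵥ ((1:ℝ) • x + t • y) = 0 := by
        rw [expand, ← hQ, hxNy, hyNx, hyNy]; linarith [hNzero]
      have hw2N : ((-t) • x + (1:ℝ) • y) ⬝ᵥ Nm *ᵥ ((-t) • x + (1:ℝ) • y) = 0 := by
        rw [expand, ← hQ, hxNy, hyNx, hyNy]; nlinarith [hNzero]
      have hw1M : ((1:ℝ) • x + t • y) ⬝ᵥ M *ᵥ ((1:ℝ) • x + t • y) = P - 2*t*Q - t^2*P := by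
        rw [expand, ← hP, hxMy, hyMx, hyMy]; ring
      have hw2M : ((-t) • x + (1:ℝ) • y) ⬝ᵥ M *ᵥ ((-t) • x + (1:ℝ) • y) = -(P - 2*t*Q - t^2*P) := by
        rw [expand, ← hP, hxMy, hyMx, hyMy]; ring
      have hw1ne : (1:ℝ) • x + t • y ≠ 0 := by
        intro h
        have hx : x = -(t • y) := eq_neg_of_add_eq_zero_left (by rwa [one_smul] at h)
        have hQt : Q = t^2 * (y ⬝ᵥ Nm *ᵥ y) := by
          rw [hQ, hx]
          simp only [Matrix.mulVec_neg, Matrix.mulVec_smul, neg_dotProduct,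
            dotProduct_neg, smul_dotProduct, dotProduct_smul,
            smul_eq_mul, neg_neg]
          ring
        rw [hyNy] at hQt
        have h7 : Q * (1+t^2) = 0 := by linear_combination hQt
        rcases mul_eq_zero.1 h7 with h8 | h8
        · exact hQ0 h8
        · nlinarith [sq_nonneg t]
      have hw2ne : (-t) • x + (1:ℝ) • y ≠ 0 := by
        intro h
        have hy : y = t • x := by
          have h6 : (1:ℝ) • y = -((-t) • x) := eq_neg_of_add_eq_zero_right h
          rw [one_smul, neg_smul, neg_neg] at h6; exact h6
        have hQt : -Q = t^2 * Q := by
          rw [← hyNy, hy, hQ]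
          simp only [Matrix.mulVec_smul, smul_dotProduct, dotProduct_smul,
            smul_eq_mul]
          ring
        have h7 : Q * (1+t^2) = 0 := by linear_combination -hQt
        rcases mul_eq_zero.1 h7 with h8 | h8
        · exact hQ0 h8
        · nlinarith [sq_nonneg t]
      by_cases hsgn : 0 ≤ P - 2*t*Q - t^2*P
      · exact ⟨_, hw1ne, hw1N, by rw [hw1M]; exact hsgn⟩
      · exact ⟨_, hw2ne, hw2N, by rw [hw2M]; linarith⟩
  have ha : 0 < w ⬝ᵥ A *ᵥ w := by have := hA.dotProduct_mulVec_pos hw0; simpa using this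
  have hd := hhyp w hw0
  rw [hNform] at hwN
  rw [hMform] at hwM
  set a : ℝ := w ⬝ᵥ A *ᵥ w
  set b : ℝ := w ⬝ᵥ B *ᵥ w
  set g : ℝ := w ⬝ᵥ C *ᵥ w
  have hk : 2*μ*a + b = 0 := by
    rcases mul_eq_zero.1 hwN with h | h
    · exact absurd h hν
    · exact h
  have hb2 : b = -2*μ*a := by linarith
  rw [hb2] at hd hwM
  have hν2 : 0 < ν^2 := by positivity
  nlinarith [mul_pos ha hν2, mul_pos ha ha, hwM, hd, mul_nonneg ha.le hwM]

lemma auxBridge {N : ℕ} (A B C : Matrix (Fin N) (Fin N) ℝ) (c : ℂ)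
    (hdet : (c ^ 2 • A.map (Complex.ofReal) + c • B.map (Complex.ofReal)
        + C.map (Complex.ofReal)).det = 0) :
    ∃ x y : Fin N → ℝ, ¬(x = 0 ∧ y = 0) ∧
      ((c.re^2-c.im^2) • A + c.re • B + C) *ᵥ x = (c.im • ((2*c.re) • A + B)) *ᵥ y ∧
      (c.im • ((2*c.re) • A + B)) *ᵥ x = - (((c.re^2-c.im^2) • A + c.re • B + C) *ᵥ y) := by
  obtain ⟨u, hu0, hu⟩ := Matrix.exists_mulVec_eq_zero_iff.2 hdet
  set μ := c.re
  set ν := c.im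
  refine ⟨fun i => (u i).re, fun i => (u i).im, ?_, ?_, ?_⟩
  · rintro ⟨hx, hy⟩
    apply hu0
    funext i
    have h1 := congrFun hx i
    have h2 := congrFun hy i
    simp only [Pi.zero_apply] at h1 h2 ⊢
    exact Complex.ext h1 h2
  all_goals {
    funext i
    have h0 := congrFun hu i
    simp only [Matrix.mulVec, dotProduct, Matrix.add_apply, Matrix.smul_apply,
      Matrix.map_apply, smul_eq_mul, Pi.zero_apply, Pi.neg_apply] at h0 ⊢
    have hterm : ∀ j, (c^2 * (A i j : ℂ) + c * (B i j : ℂ) + (C i j : ℂ)) * u j =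
        Complex.ofReal (((μ^2-ν^2) * A i j + μ * B i j + C i j) * (u j).re
          - (ν * (2*μ * A i j + B i j)) * (u j).im)
        + Complex.I * Complex.ofReal ((ν * (2*μ * A i j + B i j)) * (u j).re
          + ((μ^2-ν^2) * A i j + μ * B i j + C i j) * (u j).im) := by
      intro j
      apply Complex.ext <;>
        simp only [Complex.add_re, Complex.add_im, Complex.mul_re, Complex.mul_im,
          Complex.ofReal_re, Complex.ofReal_im, Complex.I_re, Complex.I_im, pow_two,
          mul_zero, zero_mul, sub_zero, zero_sub, add_zero, zero_add, mul_one] <;> ring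
    rw [Finset.sum_congr rfl (fun j _ => hterm j)] at h0
    rw [Finset.sum_add_distrib, ← Finset.mul_sum, ← Complex.ofReal_sum, ← Complex.ofReal_sum] at h0
    have hre := congrArg Complex.re h0
    have him := congrArg Complex.im h0
    simp only [Complex.add_re, Complex.ofReal_re, Complex.mul_re, Complex.I_re, Complex.I_im,
      Complex.ofReal_im, Complex.add_im, Complex.mul_im, Complex.zero_re, Complex.zero_im,
      zero_mul, one_mul, mul_zero, sub_zero, zero_add, add_zero, zero_sub, mul_one] at hre him
    rw [Finset.sum_sub_distrib] at hre
    rw [Finset.sum_add_distrib] at him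
    first
      | linarith [hre]
      | linarith [him]
  }

theorem stmt17 {N : ℕ} (A B C : Matrix (Fin N) (Fin N) ℝ)
    (hA : A.PosDef) (hBs : B.IsSymm) (hCs : C.IsSymm)
    (hhyp : ∀ u : Fin N → ℝ, u ≠ 0 →
      ((1 / 2 : ℝ) * (u ⬝ᵥ B.mulVec u)) ^ 2 > (u ⬝ᵥ A.mulVec u) * (u ⬝ᵥ C.mulVec u)) :
    (∀ u : Fin N → ℝ, u ≠ 0 → ∃ r₁ r₂ : ℝ, r₁ ≠ r₂ ∧
      ∀ x : ℝ, (u ⬝ᵥ A.mulVec u) * x ^ 2 + (u ⬝ᵥ B.mulVec u) * x + (u ⬝ᵥ C.mulVec u) = 0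
        ↔ (x = r₁ ∨ x = r₂)) ∧
    (∀ c : ℂ, (c ^ 2 • A.map (Complex.ofReal) + c • B.map (Complex.ofReal)
        + C.map (Complex.ofReal)).det = 0 → c.im = 0) := by
  have hAs : A.IsSymm := by
    rw [Matrix.IsSymm, ← Matrix.conjTranspose_eq_transpose_of_trivial]; exact hA.1
  constructor
  · intro u hu
    have ha : 0 < u ⬝ᵥ A.mulVec u := by have := hA.dotProduct_mulVec_pos hu; simpa using this
    exact auxQuad _ _ _ ha (hhyp u hu)
  · intro c hdet
    by_contra hν
    obtain ⟨x, y, hxy, h1, h2⟩ := auxBridge A B C c hdet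
    refine auxCore A B C ((c.re^2-c.im^2) • A + c.re • B + C) (c.im • ((2*c.re) • A + B))
      hA hhyp c.re c.im hν x y hxy
      (((hAs.smul _).add (hBs.smul _)).add hCs) (((hAs.smul _).add hBs).smul _)
      ?_ ?_ h1 h2 <;>
    · intro w
      simp only [Matrix.add_mulVec, Matrix.smul_mulVec, dotProduct_add,
        dotProduct_smul, smul_eq_mul]
      try ring
end
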